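/- If G is a graph of order n and G contains a clique of order m < n, then d(K_m) ≤ d(G); equivalently, m − 1 ≤ d(G). -/

import Mathlib

open Finset in
/-- One stage of the deduction game.  The state is a pair `(P, F)` where `P` is the set of
protected vertices and `F` is the set of vertices whose initial searchers have already fired
(moved).  A vertex `v` is fireable if it is occupied, has not yet fired, and the number of
searchers on it (in the initial layout `L`) is at least its number of unprotected neighbours.
All fireable vertices fire simultaneously: one searcher moves to each unprotected neighbour,
which thereby becomes protected. -/
def dedStep {V : Type*} [Fintype V] [DecidableEq V] (G : SimpleGraph V) [DecidableRel G.Adj]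
    (L : V → ℕ) (s : Finset V × Finset V) : Finset V × Finset V :=
  let fire : Finset V := univ.filter (fun v =>
    0 < L v ∧ v ∉ s.2 ∧ (univ.filter (fun u => G.Adj v u ∧ u ∉ s.1)).card ≤ L v)
  (s.1 ∪ fire.biUnion (fun v => univ.filter (fun u => G.Adj v u ∧ u ∉ s.1)), s.2 ∪ fire)

open Finset in
/-- A layout `L` (assigning a number of searchers to each vertex) is successful if, starting
from the initially occupied vertices being protected and no vertex having fired, iterating the
deduction stages eventually protects every vertex. -/
def DedSuccessful {V : Type*} [Fintype V] [DecidableEq V] (G : SimpleGraph V)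
    [DecidableRel G.Adj] (L : V → ℕ) : Prop :=
  ∃ k : ℕ, ((dedStep G L)^[k] (univ.filter (fun v => 0 < L v), ∅)).1 = univ

/-- The deduction number of `G`: the minimum number of searchers in a successful layout. -/
noncomputable def deductionNumber {V : Type*} [Fintype V] (G : SimpleGraph V) : ℕ :=
  letI := Classical.decEq V
  letI := Classical.decRel G.Adj
  sInf {n | ∃ L : V → ℕ, (∑ v, L v) = n ∧ DedSuccessful G L}

open Finset

section aux
variable {V : Type*} [Fintype V] [DecidableEq V] (G : SimpleGraph V) [DecidableRel G.Adj]
  (L : V → ℕ)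

lemma ded_step_inv (s : Finset V) (hs : G.IsClique s) (P F : Finset V)
    (h1 : univ.filter (fun v => 0 < L v) ⊆ P) (h2 : F ⊆ univ.filter (fun v => 0 < L v))
    (h3 : (F ∩ s).Nonempty → s ⊆ P)
    (h4 : (P ∩ s).card ≤ (∑ v ∈ F, L v) + ((univ.filter (fun v => 0 < L v) ∩ s) \ F).card
        + (if (F ∩ s).Nonempty then 1 else 0)) :
    univ.filter (fun v => 0 < L v) ⊆ (dedStep G L (P, F)).1 ∧
    (dedStep G L (P, F)).2 ⊆ univ.filter (fun v => 0 < L v) ∧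
    (((dedStep G L (P, F)).2 ∩ s).Nonempty → s ⊆ (dedStep G L (P, F)).1) ∧
    ((dedStep G L (P, F)).1 ∩ s).card ≤ (∑ v ∈ (dedStep G L (P, F)).2, L v)
      + ((univ.filter (fun v => 0 < L v) ∩ s) \ (dedStep G L (P, F)).2).card
      + (if ((dedStep G L (P, F)).2 ∩ s).Nonempty then 1 else 0) := by
  classical
  set N : V → Finset V := fun v => univ.filter (fun u => G.Adj v u ∧ u ∉ P) with hN
  set X : Finset V := univ.filter (fun v =>
    0 < L v ∧ v ∉ F ∧ (univ.filter (fun u => G.Adj v u ∧ u ∉ P)).card ≤ L v) with hX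
  have hstep : dedStep G L (P, F) = (P ∪ X.biUnion N, F ∪ X) := rfl
  rw [hstep]
  set B : Finset V := X.biUnion N with hB
  have hXocc : X ⊆ univ.filter (fun v => 0 < L v) := by
    intro v hv; simp only [hX, mem_filter, mem_univ, true_and] at hv ⊢; exact hv.1
  have hXP : X ⊆ P := hXocc.trans h1
  have hXF : ∀ v ∈ X, v ∉ F := by
    intro v hv; simp only [hX, mem_filter] at hv; exact hv.2.2.1
  have hNcard : ∀ v ∈ X, (N v).card ≤ L v := by
    intro v hv; simp only [hX, mem_filter] at hv; exact hv.2.2.2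
  have hLpos : ∀ v ∈ X, 1 ≤ L v := by
    intro v hv; exact (mem_filter.1 (hXocc hv)).2
  have hdisj : Disjoint F X := by
    rw [disjoint_right]; exact hXF
  have hsdiff : ∀ u ∈ s, u ∉ P → ∀ w, w ∈ X → w ∈ s → u ∈ N w := by
    intro u hu huP w hwX hws
    have hne : w ≠ u := fun h => huP (h ▸ hXP hwX)
    simp only [hN, mem_filter, mem_univ, true_and]
    exact ⟨hs hws hu hne, huP⟩
  -- key cardinal bound (†)
  have hBsub : ((B ∩ s) \ P).card ≤ ∑ v ∈ X, L v ∨ True := Or.inr trivial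
  refine ⟨h1.trans subset_union_left, union_subset h2 hXocc, ?_, ?_⟩
  · -- conclusion 3
    rintro ⟨u, hu⟩
    simp only [mem_inter, mem_union] at hu
    rcases hu with ⟨hF | hXu, hus⟩
    · exact (h3 ⟨u, mem_inter.2 ⟨hF, hus⟩⟩).trans subset_union_left
    · intro z hz
      by_cases hzP : z ∈ P
      · exact mem_union_left _ hzP
      · exact mem_union_right _ (mem_biUnion.2 ⟨u, hXu, hsdiff z hz hzP u hXu hus⟩)
  · -- counting
    have hsum : ∑ v ∈ F ∪ X, L v = (∑ v ∈ F, L v) + ∑ v ∈ X, L v := sum_union hdisj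
    have hXsub : X ∩ s ⊆ (univ.filter (fun v => 0 < L v) ∩ s) \ F := by
      intro v hv
      rcases mem_inter.1 hv with ⟨hvX, hvs⟩
      exact mem_sdiff.2 ⟨mem_inter.2 ⟨hXocc hvX, hvs⟩, hXF v hvX⟩
    have hsd : (univ.filter (fun v => 0 < L v) ∩ s) \ (F ∪ X)
        = ((univ.filter (fun v => 0 < L v) ∩ s) \ F) \ (X ∩ s) := by
      ext u
      simp only [mem_sdiff, mem_inter, mem_union, mem_filter, mem_univ, true_and]
      tauto
    have hc : ((univ.filter (fun v => 0 < L v) ∩ s) \ F).card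
        = ((univ.filter (fun v => 0 < L v) ∩ s) \ (F ∪ X)).card + (X ∩ s).card := by
      rw [hsd, card_sdiff_of_subset hXsub]
      have := card_le_card hXsub
      omega
    have hPB : ((P ∪ B) ∩ s).card ≤ (P ∩ s).card + ((B ∩ s) \ P).card := by
      refine le_trans (card_le_card ?_) (card_union_le _ _)
      intro u hu
      rcases mem_inter.1 hu with ⟨hu1, hus⟩
      rcases mem_union.1 hu1 with h | h
      · exact mem_union_left _ (mem_inter.2 ⟨h, hus⟩)
      · by_cases hP : u ∈ P
        · exact mem_union_left _ (mem_inter.2 ⟨hP, hus⟩)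
        · exact mem_union_right _ (mem_sdiff.2 ⟨mem_inter.2 ⟨h, hus⟩, hP⟩)
    have hkey : (X ∩ s).card + (if (F ∩ s).Nonempty then 1 else 0) + ((B ∩ s) \ P).card
        ≤ (∑ v ∈ X, L v) + (if ((F ∪ X) ∩ s).Nonempty then 1 else 0) := by
      by_cases hXs : (X ∩ s).Nonempty
      · obtain ⟨w, hw⟩ := hXs
        rcases mem_inter.1 hw with ⟨hwX, hws⟩
        have hflag' : ((F ∪ X) ∩ s).Nonempty := ⟨w, mem_inter.2 ⟨mem_union_right _ hwX, hws⟩⟩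
        rw [if_pos hflag']
        by_cases hFs : (F ∩ s).Nonempty
        · rw [if_pos hFs]
          have hsP := h3 hFs
          have hBP : ((B ∩ s) \ P) = ∅ := by
            rw [eq_empty_iff_forall_notMem]
            intro u hu
            rcases mem_sdiff.1 hu with ⟨hu1, hu2⟩
            exact hu2 (hsP (mem_inter.1 hu1).2)
          have hXscard : (X ∩ s).card ≤ ∑ v ∈ X, L v := by
            calc (X ∩ s).card ≤ ∑ v ∈ X ∩ s, L v :=
                  card_nsmul_le_sum _ _ _ (fun v hv => hLpos v (mem_inter.1 hv).1) |>.trans_eq' (by simp)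
              _ ≤ ∑ v ∈ X, L v := sum_le_sum_of_subset inter_subset_left
          rw [hBP]
          simpa using add_le_add hXscard (le_refl 1)
        · rw [if_neg hFs]
          -- (B ∩ s) \ P ⊆ N w
          have hBNw : (B ∩ s) \ P ⊆ N w := by
            intro u hu
            rcases mem_sdiff.1 hu with ⟨hu1, huP⟩
            exact hsdiff u (mem_inter.1 hu1).2 huP w hwX hws
          have h5 : ((B ∩ s) \ P).card ≤ L w := (card_le_card hBNw).trans (hNcard w hwX)
          have h6 : ((X ∩ s).erase w).card + 1 = (X ∩ s).card := card_erase_add_one hw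
          have h7 : ((X ∩ s).erase w).card ≤ ∑ v ∈ X.erase w, L v := by
            calc ((X ∩ s).erase w).card ≤ ∑ v ∈ (X ∩ s).erase w, L v :=
                  card_nsmul_le_sum _ _ _
                    (fun v hv => hLpos v (mem_inter.1 (mem_of_mem_erase hv)).1) |>.trans_eq' (by simp)
              _ ≤ ∑ v ∈ X.erase w, L v :=
                  sum_le_sum_of_subset (fun v hv => by
                    rcases mem_erase.1 hv with ⟨h8, h9⟩
                    exact mem_erase.2 ⟨h8, (mem_inter.1 h9).1⟩)
          have h10 : L w + ∑ v ∈ X.erase w, L v = ∑ v ∈ X, L v := add_sum_erase _ _ hwX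
          omega
      · have hXe : X ∩ s = ∅ := not_nonempty_iff_eq_empty.1 hXs
        have hflag : ((F ∪ X) ∩ s).Nonempty ↔ (F ∩ s).Nonempty := by
          constructor
          · rintro ⟨u, hu⟩
            rcases mem_inter.1 hu with ⟨hu1, hus⟩
            rcases mem_union.1 hu1 with h | h
            · exact ⟨u, mem_inter.2 ⟨h, hus⟩⟩
            · exact absurd (mem_inter.2 ⟨h, hus⟩ : u ∈ X ∩ s) (by simp [hXe])
          · rintro ⟨u, hu⟩
            rcases mem_inter.1 hu with ⟨hu1, hus⟩
            exact ⟨u, mem_inter.2 ⟨mem_union_left _ hu1, hus⟩⟩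
        have hBcard : ((B ∩ s) \ P).card ≤ ∑ v ∈ X, L v := by
          calc ((B ∩ s) \ P).card ≤ B.card := card_le_card (fun u hu =>
                (mem_inter.1 (mem_sdiff.1 hu).1).1)
            _ ≤ ∑ v ∈ X, (N v).card := card_biUnion_le
            _ ≤ ∑ v ∈ X, L v := sum_le_sum hNcard
        simp only [hXe, card_empty, hflag]
        omega
    calc ((P ∪ B) ∩ s).card ≤ (P ∩ s).card + ((B ∩ s) \ P).card := hPB
      _ ≤ ((∑ v ∈ F, L v) + ((univ.filter (fun v => 0 < L v) ∩ s) \ F).card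
            + (if (F ∩ s).Nonempty then 1 else 0)) + ((B ∩ s) \ P).card := by
          exact Nat.add_le_add_right h4 _
      _ ≤ (∑ v ∈ F ∪ X, L v) + ((univ.filter (fun v => 0 < L v) ∩ s) \ (F ∪ X)).card
            + (if ((F ∪ X) ∩ s).Nonempty then 1 else 0) := by
          rw [hsum, hc]
          omega


end aux

section aux2
variable {V : Type*} [Fintype V] [DecidableEq V] (G : SimpleGraph V) [DecidableRel G.Adj]
  (L : V → ℕ)

lemma ded_invariant (s : Finset V) (hs : G.IsClique s) (k : ℕ) :
    univ.filter (fun v => 0 < L v) ⊆ ((dedStep G L)^[k] (univ.filter (fun v => 0 < L v), ∅)).1 ∧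
    ((dedStep G L)^[k] (univ.filter (fun v => 0 < L v), ∅)).2 ⊆ univ.filter (fun v => 0 < L v) ∧
    ((((dedStep G L)^[k] (univ.filter (fun v => 0 < L v), ∅)).2 ∩ s).Nonempty →
      s ⊆ ((dedStep G L)^[k] (univ.filter (fun v => 0 < L v), ∅)).1) ∧
    (((dedStep G L)^[k] (univ.filter (fun v => 0 < L v), ∅)).1 ∩ s).card
      ≤ (∑ v ∈ ((dedStep G L)^[k] (univ.filter (fun v => 0 < L v), ∅)).2, L v)
      + ((univ.filter (fun v => 0 < L v) ∩ s)
          \ ((dedStep G L)^[k] (univ.filter (fun v => 0 < L v), ∅)).2).card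
      + (if (((dedStep G L)^[k] (univ.filter (fun v => 0 < L v), ∅)).2 ∩ s).Nonempty
          then 1 else 0) := by
  induction k with
  | zero =>
    refine ⟨Finset.Subset.refl _, by simp, by simp, ?_⟩
    simp
  | succ k ih =>
    rw [Function.iterate_succ_apply']
    obtain ⟨i1, i2, i3, i4⟩ := ih
    exact ded_step_inv G L s hs _ _ i1 i2 i3 i4

lemma ded_lower (s : Finset V) (m : ℕ) (hs : G.IsNClique m s) (hL : DedSuccessful G L) :
    m ≤ (∑ v, L v) + 1 := by
  obtain ⟨k, hk⟩ := hL
  obtain ⟨-, -, -, h4⟩ := ded_invariant G L s hs.1 k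
  rw [hk] at h4
  rw [univ_inter, hs.2] at h4
  set F := ((dedStep G L)^[k] (univ.filter (fun v => 0 < L v), ∅)).2 with hF
  have hd : Disjoint F ((univ.filter (fun v => 0 < L v) ∩ s) \ F) := disjoint_sdiff
  have hbound : (∑ v ∈ F, L v) + ((univ.filter (fun v => 0 < L v) ∩ s) \ F).card
      ≤ ∑ v, L v := by
    calc (∑ v ∈ F, L v) + ((univ.filter (fun v => 0 < L v) ∩ s) \ F).card
        ≤ (∑ v ∈ F, L v) + ∑ v ∈ (univ.filter (fun v => 0 < L v) ∩ s) \ F, L v := by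
          refine Nat.add_le_add_left ?_ _
          refine (card_nsmul_le_sum _ _ 1 (fun v hv => ?_)).trans_eq' (by simp)
          have := (mem_filter.1 (mem_inter.1 (mem_sdiff.1 hv).1).1).2
          omega
      _ = ∑ v ∈ F ∪ ((univ.filter (fun v => 0 < L v) ∩ s) \ F), L v := (sum_union hd).symm
      _ ≤ ∑ v, L v := sum_le_sum_of_subset (subset_univ _)
  split_ifs at h4 <;> omega

lemma ded_one (hV : Nonempty V) (hL : DedSuccessful G L) : 1 ≤ ∑ v, L v := by
  by_contra h
  push_neg at h
  interval_cases hsum : (∑ v, L v)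
  have hL0 : ∀ v, L v = 0 := by
    intro v
    have := Finset.sum_eq_zero_iff.1 hsum
    exact this v (mem_univ v)
  have hocc : univ.filter (fun v => 0 < L v) = (∅ : Finset V) := by
    ext v; simp [hL0]
  have hfix : ∀ k, (dedStep G L)^[k] ((∅ : Finset V), (∅ : Finset V)) = (∅, ∅) := by
    intro k
    induction k with
    | zero => rfl
    | succ k ih =>
      rw [Function.iterate_succ_apply', ih]
      simp [dedStep, hL0]
  obtain ⟨k, hk⟩ := hL
  rw [hocc, hfix k] at hk
  obtain ⟨v⟩ := hV
  have hv : v ∈ ((∅, ∅) : Finset V × Finset V).1 := by rw [hk]; exact mem_univ v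
  simp at hv

end aux2

section aux3
variable {m : ℕ} [DecidableEq (Fin m)] [DecidableRel (⊤ : SimpleGraph (Fin m)).Adj]

lemma top_successful (hm : 0 < m) :
    ∃ L : Fin m → ℕ, (∑ v, L v) = max (m - 1) 1 ∧ DedSuccessful (⊤ : SimpleGraph (Fin m)) L := by
  set x0 : Fin m := ⟨0, hm⟩ with hx0
  set L : Fin m → ℕ := fun v => if v = x0 then max (m - 1) 1 else 0 with hLdef
  have hL0 : L x0 = max (m - 1) 1 := by simp [hLdef]
  have hLother : ∀ v, v ≠ x0 → L v = 0 := fun v hv => by simp [hLdef, hv]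
  have hocc : univ.filter (fun v => 0 < L v) = {x0} := by
    ext v
    by_cases hv : v = x0 <;> simp [hLdef, hv]
  refine ⟨L, ?_, 1, ?_⟩
  · simp [hLdef, Finset.sum_ite_eq']
  · rw [Function.iterate_one]
    have hx0occ : x0 ∈ univ.filter (fun v => 0 < L v) := by rw [hocc]; exact mem_singleton_self _
    have hfe : (univ.filter (fun u : Fin m => (⊤ : SimpleGraph (Fin m)).Adj x0 u ∧
        u ∉ univ.filter (fun v => 0 < L v))) = univ.erase x0 := by
      rw [hocc]
      ext w
      by_cases hw : w = x0 <;> simp [hw, eq_comm]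
    have hcard : (univ.filter (fun u : Fin m => (⊤ : SimpleGraph (Fin m)).Adj x0 u ∧
        u ∉ univ.filter (fun v => 0 < L v))).card ≤ L x0 := by
      rw [hfe, card_erase_of_mem (mem_univ _), card_univ, Fintype.card_fin, hL0]
      omega
    have hx0fire : x0 ∈ univ.filter (fun v =>
        0 < L v ∧ v ∉ (∅ : Finset (Fin m)) ∧ (univ.filter (fun u =>
          (⊤ : SimpleGraph (Fin m)).Adj v u ∧ u ∉ univ.filter (fun v => 0 < L v))).card ≤ L v) := by
      refine mem_filter.2 ⟨mem_univ _, ?_, notMem_empty _, hcard⟩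
      rw [hL0]; omega
    apply eq_univ_of_forall
    intro u
    show u ∈ (univ.filter (fun v => 0 < L v)) ∪ _
    by_cases hu : u = x0
    · exact mem_union_left _ (hu ▸ hx0occ)
    · refine mem_union_right _ (mem_biUnion.2 ⟨x0, hx0fire, ?_⟩)
      refine mem_filter.2 ⟨mem_univ _, ?_, ?_⟩
      · simp [Ne.symm hu]
      · rw [hocc]; simpa using hu

end aux3

theorem deduction_clique_le {V : Type*} [Fintype V] (G : SimpleGraph V) (m : ℕ)
    (s : Finset V) (hs : G.IsNClique m s) (hm : m < Fintype.card V) :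
    deductionNumber (⊤ : SimpleGraph (Fin m)) ≤ deductionNumber G ∧
      m - 1 ≤ deductionNumber G := by
  have hV : Nonempty V := Fintype.card_pos_iff.mp (lt_of_le_of_lt (Nat.zero_le m) hm)
  letI := Classical.decEq V
  letI := Classical.decRel G.Adj
  have hGdef : deductionNumber G
      = sInf {n | ∃ L : V → ℕ, (∑ v, L v) = n ∧ DedSuccessful G L} := rfl
  have hset : {n | ∃ L : V → ℕ, (∑ v, L v) = n ∧ DedSuccessful G L}.Nonempty := by
    refine ⟨Fintype.card V, fun _ => 1, by simp, 0, ?_⟩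
    simp
  have hm1 : m - 1 ≤ deductionNumber G := by
    rw [hGdef]
    refine le_csInf hset ?_
    intro n hn
    obtain ⟨L, rfl, hL⟩ := hn
    exact Nat.sub_le_of_le_add (ded_lower G L s m hs hL)
  have h1 : 1 ≤ deductionNumber G := by
    rw [hGdef]
    refine le_csInf hset ?_
    intro n hn
    obtain ⟨L, rfl, hL⟩ := hn
    exact ded_one G L hV hL
  refine ⟨?_, hm1⟩
  rcases Nat.eq_zero_or_pos m with hm0 | hmpos
  · subst hm0
    letI := Classical.decEq (Fin 0)
    letI := Classical.decRel (⊤ : SimpleGraph (Fin 0)).Adj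
    have hle : deductionNumber (⊤ : SimpleGraph (Fin 0)) ≤ 0 :=
      Nat.sInf_le ⟨fun _ => 0, by simp, 0, by simp⟩
    exact le_trans hle (Nat.zero_le _)
  · obtain ⟨L, hsum, hsucc⟩ :=
      @top_successful m (Classical.decEq _) (Classical.decRel _) hmpos
    have hup : deductionNumber (⊤ : SimpleGraph (Fin m)) ≤ max (m - 1) 1 :=
      Nat.sInf_le ⟨L, hsum, hsucc⟩
    exact hup.trans (max_le hm1 h1)
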